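/- Let A be a primitive square matrix with nonnegative real entries indexed by a finite nonempty type, let s > 0, let r and l have all entries strictly positive, and assume A·r = s·r, lᵀ·A = s·lᵀ and Σ_w l_w·r_w = 1. Then for every real vector v, the sequence s^{−n}·(A^n·v) converges, as n → ∞, to (Σ_w l_w·v_w)·r. -/

import Mathlib

open Finset Filter Matrix

section RPF

variable {n : Type*} [Fintype n] [Nonempty n] [DecidableEq n]

/-- max of `v i / r i`. -/
noncomputable def rpfS (r v : n → ℝ) : ℝ :=
  Finset.univ.sup' Finset.univ_nonempty (fun i => v i / r i)

/-- min of `v i / r i`. -/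
noncomputable def rpfI (r v : n → ℝ) : ℝ :=
  Finset.univ.inf' Finset.univ_nonempty (fun i => v i / r i)

variable {r : n → ℝ}

lemma le_rpfS (hr : ∀ i, 0 < r i) (v : n → ℝ) (i : n) : v i ≤ rpfS r v * r i := by
  have h := Finset.le_sup' (fun i => v i / r i) (Finset.mem_univ i)
  exact (div_le_iff₀ (hr i)).mp h

lemma rpfI_le (hr : ∀ i, 0 < r i) (v : n → ℝ) (i : n) : rpfI r v * r i ≤ v i := by
  have h := Finset.inf'_le (fun i => v i / r i) (Finset.mem_univ i)
  exact (le_div_iff₀ (hr i)).mp h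

lemma rpfI_le_rpfS (v : n → ℝ) : rpfI r v ≤ rpfS r v := by
  obtain ⟨i⟩ := ‹Nonempty n›
  have h1 := Finset.inf'_le (fun i => v i / r i) (Finset.mem_univ i)
  have h2 := Finset.le_sup' (fun i => v i / r i) (Finset.mem_univ i)
  exact le_trans h1 h2

lemma rpfS_mulVec (hr : ∀ i, 0 < r i) {B : Matrix n n ℝ} (hB : ∀ i j, 0 ≤ B i j)
    (hBr : B.mulVec r = r) (v : n → ℝ) :
    rpfS r (B.mulVec v) ≤ rpfS r v := by
  apply Finset.sup'_le
  intro i _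
  rw [div_le_iff₀ (hr i)]
  have : B.mulVec v i ≤ rpfS r v * (B.mulVec r i) := by
    simp only [Matrix.mulVec, dotProduct, Finset.mul_sum]
    apply Finset.sum_le_sum
    intro j _
    have := le_rpfS hr v j
    nlinarith [hB i j]
  rwa [hBr] at this

lemma rpfI_mulVec (hr : ∀ i, 0 < r i) {B : Matrix n n ℝ} (hB : ∀ i j, 0 ≤ B i j)
    (hBr : B.mulVec r = r) (v : n → ℝ) :
    rpfI r v ≤ rpfI r (B.mulVec v) := by
  apply Finset.le_inf'
  intro i _
  rw [le_div_iff₀ (hr i)]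
  have : rpfI r v * (B.mulVec r i) ≤ B.mulVec v i := by
    simp only [Matrix.mulVec, dotProduct, Finset.mul_sum]
    apply Finset.sum_le_sum
    intro j _
    have := rpfI_le hr v j
    nlinarith [hB i j]
  rwa [hBr] at this

lemma rpf_gap_lower (hr : ∀ i, 0 < r i) {C : Matrix n n ℝ} (hC : ∀ i j, 0 ≤ C i j)
    (hCr : C.mulVec r = r) {c : ℝ}
    (hc : ∀ i j, c * r i ≤ C i j * r j) (v : n → ℝ) :
    rpfI r v + c * (rpfS r v - rpfI r v) ≤ rpfI r (C.mulVec v) := by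
  set f := rpfS r v with hf
  set g := rpfI r v with hg
  have hfg : 0 ≤ f - g := sub_nonneg.mpr (rpfI_le_rpfS v)
  obtain ⟨j0, _, hj0⟩ := Finset.exists_mem_eq_sup' (Finset.univ_nonempty)
    (fun i => v i / r i)
  have hvj0 : v j0 = f * r j0 := by
    field_simp [hf, rpfS] at hj0 ⊢
    rw [eq_comm, div_eq_iff (ne_of_gt (hr j0))] at hj0
    simp only [hf, rpfS]
    linarith [hj0]
  apply Finset.le_inf'
  intro i _
  rw [le_div_iff₀ (hr i)]
  -- key single-term bound
  have key : (C i j0 * r j0) * (f - g) ≤ ∑ j, C i j * (v j - g * r j) := by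
    have hterm : (C i j0 * r j0) * (f - g) = C i j0 * (v j0 - g * r j0) := by
      rw [hvj0]; ring
    rw [hterm]
    apply Finset.single_le_sum (f := fun j => C i j * (v j - g * r j))
      (fun j _ => mul_nonneg (hC i j) (by linarith [rpfI_le hr v j]))
      (Finset.mem_univ j0)
  have sum_eq : ∑ j, C i j * (v j - g * r j) = C.mulVec v i - g * r i := by
    have hre : C.mulVec r i = r i := by rw [hCr]
    simp only [Matrix.mulVec, dotProduct] at hre ⊢
    rw [← hre]
    rw [Finset.mul_sum, ← Finset.sum_sub_distrib]
    apply Finset.sum_congr rfl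
    intro j _; ring
  rw [sum_eq] at key
  nlinarith [hc i j0]

lemma rpf_gap_upper (hr : ∀ i, 0 < r i) {C : Matrix n n ℝ} (hC : ∀ i j, 0 ≤ C i j)
    (hCr : C.mulVec r = r) {c : ℝ}
    (hc : ∀ i j, c * r i ≤ C i j * r j) (v : n → ℝ) :
    rpfS r (C.mulVec v) ≤ rpfS r v - c * (rpfS r v - rpfI r v) := by
  set f := rpfS r v with hf
  set g := rpfI r v with hg
  have hfg : 0 ≤ f - g := sub_nonneg.mpr (rpfI_le_rpfS v)
  obtain ⟨j1, _, hj1⟩ := Finset.exists_mem_eq_inf' (Finset.univ_nonempty)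
    (fun i => v i / r i)
  have hvj1 : v j1 = g * r j1 := by
    field_simp [hg, rpfI] at hj1 ⊢
    rw [eq_comm, div_eq_iff (ne_of_gt (hr j1))] at hj1
    simp only [hg, rpfI]
    linarith [hj1]
  apply Finset.sup'_le
  intro i _
  rw [div_le_iff₀ (hr i)]
  have key : (C i j1 * r j1) * (f - g) ≤ ∑ j, C i j * (f * r j - v j) := by
    have hterm : (C i j1 * r j1) * (f - g) = C i j1 * (f * r j1 - v j1) := by
      rw [hvj1]; ring
    rw [hterm]
    apply Finset.single_le_sum (f := fun j => C i j * (f * r j - v j))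
      (fun j _ => mul_nonneg (hC i j) (by linarith [le_rpfS hr v j]))
      (Finset.mem_univ j1)
  have sum_eq : ∑ j, C i j * (f * r j - v j) = f * r i - C.mulVec v i := by
    have hre : C.mulVec r i = r i := by rw [hCr]
    simp only [Matrix.mulVec, dotProduct] at hre ⊢
    rw [← hre]
    rw [Finset.mul_sum, ← Finset.sum_sub_distrib]
    apply Finset.sum_congr rfl
    intro j _; ring
  rw [sum_eq] at key
  nlinarith [hc i j1]

end RPF

/-- **Ruelle–Perron–Frobenius, power-method convergence.**
With Perron data `(s, r, l)` for a primitive nonnegative matrix `A`, for every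
vector `v` the sequence `s⁻ⁿ • (Aⁿ.mulVec v)` converges to `(∑ w, l w * v w) • r`. -/
theorem rpf_power_method_convergence
    {n : Type*} [Fintype n] [Nonempty n] [DecidableEq n]
    (A : Matrix n n ℝ) (hA : ∀ i j, 0 ≤ A i j)
    (hprim : ∃ k : ℕ, 1 ≤ k ∧ ∀ i j, 0 < (A ^ k) i j)
    (s : ℝ) (hs : 0 < s) (r l : n → ℝ)
    (hr : ∀ i, 0 < r i) (hl : ∀ i, 0 < l i)
    (hright : A.mulVec r = s • r) (hleft : Matrix.vecMul l A = s • l)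
    (hnorm : ∑ w, l w * r w = 1) :
    ∀ v : n → ℝ,
      Filter.Tendsto (fun m : ℕ => (s ^ m)⁻¹ • (A ^ m).mulVec v)
        Filter.atTop (nhds ((∑ w, l w * v w) • r)) := by
  intro v
  obtain ⟨k, hk1, hkpos⟩ := hprim
  set B : Matrix n n ℝ := s⁻¹ • A with hBdef
  have hspos : (0:ℝ) < s⁻¹ := inv_pos.mpr hs
  have hB : ∀ i j, 0 ≤ B i j := fun i j => by
    simp only [hBdef, Matrix.smul_apply, smul_eq_mul]
    exact mul_nonneg (le_of_lt hspos) (hA i j)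
  have hBr : B.mulVec r = r := by
    rw [hBdef, Matrix.smul_mulVec, hright, smul_smul,
      inv_mul_cancel₀ (ne_of_gt hs), one_smul]
  have hBpow : ∀ m : ℕ, (B ^ m) = (s ^ m)⁻¹ • (A ^ m) := by
    intro m
    rw [hBdef, smul_pow, inv_pow]
  have hBpow_nonneg : ∀ m i j, 0 ≤ (B ^ m) i j := fun m i j => by
    rw [hBpow]
    simp only [Matrix.smul_apply, smul_eq_mul]
    have : 0 ≤ ((A ^ m) i j) := by
      induction m generalizing i j with
      | zero => simp only [pow_zero, Matrix.one_apply]; split <;> norm_num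
      | succ m ih =>
        rw [pow_succ, Matrix.mul_apply]
        exact Finset.sum_nonneg fun j' _ => mul_nonneg (ih i j') (hA j' j)
    positivity
  have hBrpow : ∀ m : ℕ, (B ^ m).mulVec r = r := by
    intro m
    induction m with
    | zero => simp
    | succ m ih =>
      rw [pow_succ', ← Matrix.mulVec_mulVec, ih, hBr]
  -- the matrix C := B^k has positive entries
  set C : Matrix n n ℝ := B ^ k with hCdef
  have hCpos : ∀ i j, 0 < C i j := fun i j => by
    rw [hCdef, hBpow]
    simp only [Matrix.smul_apply, smul_eq_mul]
    exact mul_pos (inv_pos.mpr (pow_pos hs k)) (hkpos i j)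
  have hCr : C.mulVec r = r := hBrpow k
  -- contraction constant
  obtain ⟨i0⟩ := ‹Nonempty n›
  set ε : ℝ := Finset.univ.inf' Finset.univ_nonempty
      (fun p : n × n => C p.1 p.2 * r p.2) with hεdef
  have hεpos : 0 < ε := by
    rw [hεdef]
    apply (Finset.lt_inf'_iff _).mpr
    intro p _
    exact mul_pos (hCpos p.1 p.2) (hr p.2)
  set ρ : ℝ := Finset.univ.sup' Finset.univ_nonempty r with hρdef
  have hρpos : 0 < ρ := lt_of_lt_of_le (hr i0)
    (Finset.le_sup' r (Finset.mem_univ i0))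
  set c : ℝ := min (ε / ρ) (1/2) with hcdef
  have hcpos : 0 < c := lt_min (div_pos hεpos hρpos) (by norm_num)
  have hchalf : c ≤ 1/2 := min_le_right _ _
  have hc : ∀ i j, c * r i ≤ C i j * r j := by
    intro i j
    have h1 : c * r i ≤ (ε / ρ) * ρ := by
      apply mul_le_mul (min_le_left _ _) (Finset.le_sup' r (Finset.mem_univ i))
        (le_of_lt (hr i)) (le_of_lt (div_pos hεpos hρpos))
    have h2 : (ε / ρ) * ρ = ε := div_mul_cancel₀ ε (ne_of_gt hρpos)
    have h3 : ε ≤ C i j * r j :=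
      Finset.inf'_le (fun p : n × n => C p.1 p.2 * r p.2) (Finset.mem_univ (i, j))
    linarith
  set θ : ℝ := 1 - 2 * c with hθdef
  have hθ0 : 0 ≤ θ := by rw [hθdef]; linarith
  have hθ1 : θ < 1 := by rw [hθdef]; linarith
  -- the iterates
  set P : ℕ → (n → ℝ) := fun m => (B ^ m).mulVec v with hPdef
  have hPsucc : ∀ m, P (m + 1) = B.mulVec (P m) := by
    intro m
    rw [hPdef]
    simp only
    rw [pow_succ', ← Matrix.mulVec_mulVec]
  have hPadd : ∀ m, P (m + k) = C.mulVec (P m) := by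
    intro m
    rw [hPdef, hCdef]
    simp only
    rw [Matrix.mulVec_mulVec, ← pow_add, add_comm k m]
  set a : ℕ → ℝ := fun m => rpfI r (P m) with hadef
  set b : ℕ → ℝ := fun m => rpfS r (P m) with hbdef
  have hab : ∀ m, a m ≤ b m := fun m => rpfI_le_rpfS (P m)
  have ha_mono : Monotone a := by
    apply monotone_nat_of_le_succ
    intro m
    rw [hadef]; simp only
    rw [hPsucc]
    exact rpfI_mulVec hr hB hBr (P m)
  have hb_anti : Antitone b := by
    apply antitone_nat_of_succ_le
    intro m
    rw [hbdef]; simp only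
    rw [hPsucc]
    exact rpfS_mulVec hr hB hBr (P m)
  set d : ℕ → ℝ := fun m => b m - a m with hddef
  have hd_nonneg : ∀ m, 0 ≤ d m := fun m => sub_nonneg.mpr (hab m)
  have hd_anti : Antitone d := by
    apply antitone_nat_of_succ_le
    intro m
    have h1 := ha_mono (Nat.le_succ m)
    have h2 := hb_anti (Nat.le_succ m)
    simp only [hddef]
    linarith
  have hd_step : ∀ m, d (m + k) ≤ θ * d m := by
    intro m
    have h1 := rpf_gap_lower hr (fun i j => le_of_lt (hCpos i j)) hCr hc (P m)
    have h2 := rpf_gap_upper hr (fun i j => le_of_lt (hCpos i j)) hCr hc (P m)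
    rw [← hPadd] at h1 h2
    simp only [hddef, hadef, hbdef, hθdef] at *
    linarith
  have hd_geo : ∀ q : ℕ, d (k * q) ≤ θ ^ q * d 0 := by
    intro q
    induction q with
    | zero => simp
    | succ q ih =>
      have : k * (q + 1) = k * q + k := by ring
      rw [this, pow_succ]
      calc d (k * q + k) ≤ θ * d (k * q) := hd_step (k * q)
        _ ≤ θ * (θ ^ q * d 0) := by
            apply mul_le_mul_of_nonneg_left ih hθ0
        _ = θ ^ q * θ * d 0 := by ring
  have hd_bound : ∀ m, d m ≤ θ ^ (m / k) * d 0 := by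
    intro m
    have h1 : k * (m / k) ≤ m := Nat.mul_div_le m k
    calc d m ≤ d (k * (m / k)) := hd_anti h1
      _ ≤ θ ^ (m / k) * d 0 := hd_geo (m / k)
  have hkpos' : 0 < k := hk1
  have hdiv_tend : Tendsto (fun m : ℕ => m / k) atTop atTop := by
    apply tendsto_atTop_atTop.mpr
    intro bnd
    exact ⟨bnd * k, fun m hm => (Nat.le_div_iff_mul_le hkpos').mpr hm⟩
  have hθ_tend : Tendsto (fun m : ℕ => θ ^ (m / k) * d 0) atTop (nhds 0) := by
    have h := (tendsto_pow_atTop_nhds_zero_of_lt_one hθ0 hθ1).comp hdiv_tend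
    have := h.mul_const (d 0)
    simpa using this
  have hd_tend : Tendsto d atTop (nhds 0) :=
    squeeze_zero hd_nonneg hd_bound hθ_tend
  -- limit of a
  have ha_bdd : BddAbove (Set.range a) := by
    refine ⟨b 0, ?_⟩
    rintro x ⟨m, rfl⟩
    exact le_trans (hab m) (hb_anti (Nat.zero_le m))
  set L : ℝ := ⨆ m, a m with hLdef
  have ha_tend : Tendsto a atTop (nhds L) := tendsto_atTop_ciSup ha_mono ha_bdd
  have hb_tend : Tendsto b atTop (nhds L) := by
    have : Tendsto (fun m => a m + d m) atTop (nhds (L + 0)) := ha_tend.add hd_tend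
    simp only [add_zero] at this
    convert this using 2 with m
    simp [hddef]
  -- coordinatewise convergence
  have hcoord : ∀ i, Tendsto (fun m => P m i) atTop (nhds (L * r i)) := by
    intro i
    apply tendsto_of_tendsto_of_tendsto_of_le_of_le
      (ha_tend.mul_const (r i)) (hb_tend.mul_const (r i))
    · intro m
      exact rpfI_le hr (P m) i
    · intro m
      exact le_rpfS hr (P m) i
  -- identify L
  have hlB : Matrix.vecMul l B = l := by
    funext j
    have h := congrFun hleft j
    simp only [Matrix.vecMul, dotProduct, Pi.smul_apply, smul_eq_mul] at h ⊢
    simp only [hBdef, Matrix.smul_apply, smul_eq_mul]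
    have hrw : ∑ i, l i * (s⁻¹ * A i j) = s⁻¹ * ∑ i, l i * A i j := by
      rw [Finset.mul_sum]; apply Finset.sum_congr rfl; intros; ring
    rw [hrw, h]
    field_simp
  have hlBpow : ∀ m, Matrix.vecMul l (B ^ m) = l := by
    intro m
    induction m with
    | zero => simp
    | succ m ih => rw [pow_succ, ← Matrix.vecMul_vecMul, ih, hlB]
  have hlP : ∀ m, ∑ i, l i * P m i = ∑ i, l i * v i := by
    intro m
    have : l ⬝ᵥ (B ^ m).mulVec v = Matrix.vecMul l (B ^ m) ⬝ᵥ v :=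
      dotProduct_mulVec l (B ^ m) v
    rw [hlBpow] at this
    simpa [dotProduct, hPdef] using this
  have hsum_tend : Tendsto (fun m => ∑ i, l i * P m i) atTop
      (nhds (∑ i, l i * (L * r i))) := by
    apply tendsto_finset_sum
    intro i _
    exact (hcoord i).const_mul (l i)
  have hconst : Tendsto (fun _ : ℕ => ∑ i, l i * v i) atTop
      (nhds (∑ i, l i * v i)) := tendsto_const_nhds
  have hL_eq : ∑ i, l i * v i = L := by
    have heq : (fun m => ∑ i, l i * P m i) = (fun _ : ℕ => ∑ i, l i * v i) := by
      funext m; exact hlP m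
    rw [heq] at hsum_tend
    have h := tendsto_nhds_unique hconst hsum_tend
    rw [h]
    have : ∑ i, l i * (L * r i) = L * ∑ i, l i * r i := by
      rw [Finset.mul_sum]
      apply Finset.sum_congr rfl
      intro i _; ring
    rw [this, hnorm, mul_one]
  -- finish
  have hfun : (fun m : ℕ => (s ^ m)⁻¹ • (A ^ m).mulVec v) = P := by
    funext m
    rw [hPdef]
    simp only
    rw [hBpow, Matrix.smul_mulVec]
  rw [hfun]
  have hlim : ((∑ w, l w * v w) • r) = (fun i => L * r i) := by
    funext i
    simp [hL_eq]
  rw [hlim]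
  exact tendsto_pi_nhds.mpr hcoord
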